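/- Every connected graph with independence number at most 2 has a Hamiltonian path. -/

import Mathlib

open SimpleGraph

variable {V : Type*}

/-- `G` has independence number at most `k`: every independent set has at most `k` vertices. -/
def IndepBound (G : SimpleGraph V) (k : ℕ) : Prop :=
  ∀ s : Finset V, (∀ a ∈ s, ∀ b ∈ s, a ≠ b → ¬ G.Adj a b) → s.card ≤ k

/-- The induced subgraph on `A` has independence number at most `k`. -/
def IndepBoundOn (G : SimpleGraph V) (A : Set V) (k : ℕ) : Prop :=
  ∀ s : Finset V, ↑s ⊆ A → (∀ a ∈ s, ∀ b ∈ s, a ≠ b → ¬ G.Adj a b) → s.card ≤ k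

/-- `x` is a cut vertex (articulation point): `G - x` is disconnected. -/
def IsCutVertex (G : SimpleGraph V) (x : V) : Prop :=
  ¬ (G.induce ({x}ᶜ : Set V)).Preconnected

/-- `S` is a vertex cut: `G - S` is disconnected. -/
def IsCutSet (G : SimpleGraph V) (S : Set V) : Prop :=
  ¬ (G.induce Sᶜ).Preconnected

/-- `G` has a Hamiltonian path with endpoints `u` and `v`. -/
def HasHamPathBetween [DecidableEq V] (G : SimpleGraph V) (u v : V) : Prop :=
  ∃ p : G.Walk u v, p.IsHamiltonian

/-- `G` has a Hamiltonian path starting at `u`. -/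
def HasHamPathFrom [DecidableEq V] (G : SimpleGraph V) (u : V) : Prop :=
  ∃ v, ∃ p : G.Walk u v, p.IsHamiltonian

/-- `G` has a Hamiltonian path. -/
def HasHamPath [DecidableEq V] (G : SimpleGraph V) : Prop :=
  ∃ u v, ∃ p : G.Walk u v, p.IsHamiltonian

/-- `G` has a path cover of size two: two vertex-disjoint paths, one starting at `u`
and the other starting at `v`, whose vertex sets partition `V(G)`. -/
def HasPathCover2 (G : SimpleGraph V) (u v : V) : Prop :=
  ∃ (a b : V) (p : G.Walk u a) (q : G.Walk v b), p.IsPath ∧ q.IsPath ∧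
    ∀ w, (w ∈ p.support ∧ w ∉ q.support) ∨ (w ∈ q.support ∧ w ∉ p.support)

/-- `G` is `s`-connected: more than `s` vertices, and removing any fewer than `s`
vertices leaves the graph connected. -/
def SConnected (G : SimpleGraph V) (s : ℕ) : Prop :=
  s < Nat.card V ∧ ∀ S : Set V, S.ncard < s → (G.induce Sᶜ).Connected

section MyAux

variable {V : Type*} [DecidableEq V] {G : SimpleGraph V}

private lemma my_cross_aux {S : Finset V} {a b : V} (p : G.Walk a b) :
    a ∈ S → b ∉ S → ∃ v ∉ S, ∃ w ∈ S, G.Adj v w := by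
  induction p with
  | nil => exact fun ha hb => absurd ha hb
  | @cons a c b h q ih =>
    intro ha hb
    by_cases hc : c ∈ S
    · exact ih hc hb
    · exact ⟨c, hc, a, ha, h.symm⟩

private lemma my_extend_path (hα : IndepBound G 2) {u z v w : V} (p : G.Walk u z)
    (hp : p.IsPath) (hv : v ∉ p.support) (hw : w ∈ p.support) (hadj : G.Adj v w) :
    ∃ u' z', ∃ q : G.Walk u' z', q.IsPath ∧ ∀ x, x ∈ q.support ↔ x = v ∨ x ∈ p.support := by
  by_cases hvu : G.Adj v u
  · exact ⟨v, z, Walk.cons hvu p, hp.cons hv, fun x => by simp⟩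
  by_cases hvz : G.Adj v z
  · refine ⟨v, u, Walk.cons hvz p.reverse, hp.reverse.cons (by simpa using hv), fun x => ?_⟩
    simp only [Walk.support_cons, List.mem_cons, Walk.support_reverse, List.mem_reverse]
  have hwu : w ≠ u := fun h => hvu (h ▸ hadj)
  have hwz : w ≠ z := fun h => hvz (h ▸ hadj)
  have hvu' : v ≠ u := fun h => hv (h ▸ p.start_mem_support)
  have hvz' : v ≠ z := fun h => hv (h ▸ p.end_mem_support)
  have huz_ne : u ≠ z := by
    rintro rfl
    cases p with
    | nil => simp only [Walk.support_nil, List.mem_singleton] at hw; exact hwu hw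
    | cons h q =>
      have := hp.support_nodup
      simp only [Walk.support_cons, List.nodup_cons] at this
      exact this.1 q.end_mem_support
  have huz : G.Adj u z := by
    by_contra hne
    have hindep : ∀ a ∈ ({v, u, z} : Finset V), ∀ b ∈ ({v, u, z} : Finset V),
        a ≠ b → ¬ G.Adj a b := by
      intro a ha b hb hab
      simp only [Finset.mem_insert, Finset.mem_singleton] at ha hb
      rcases ha with rfl | rfl | rfl <;> rcases hb with rfl | rfl | rfl <;>
        first
          | exact absurd rfl hab
          | assumption
          | exact fun h => hvu h.symm
          | exact fun h => hvz h.symm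
          | exact fun h => hne h.symm
    have hcard := hα {v, u, z} hindep
    rw [Finset.card_insert_of_notMem (by simp [hvu', hvz']),
      Finset.card_insert_of_notMem (by simp [huz_ne]), Finset.card_singleton] at hcard
    omega
  obtain ⟨c, hwc, q2, hq2⟩ := Walk.exists_eq_cons_of_ne hwz (p.dropUntil w hw)
  set p1 := p.takeUntil w hw with hp1
  have hspec : p1.append (p.dropUntil w hw) = p := p.take_spec hw
  have hps : p.support = p1.support ++ q2.support := by
    rw [← hspec, hq2, Walk.support_append, Walk.support_cons, List.tail_cons]
  have hnod : (p1.support ++ q2.support).Nodup := hps ▸ hp.support_nodup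
  rw [List.nodup_append] at hnod
  refine ⟨v, c, Walk.cons hadj (p1.reverse.append (Walk.cons huz q2.reverse)), ?_, ?_⟩
  · apply Walk.IsPath.mk'
    rw [Walk.support_cons, Walk.support_append, Walk.support_cons, List.tail_cons,
      Walk.support_reverse, Walk.support_reverse, List.nodup_cons, List.nodup_append]
    refine ⟨?_, by simpa using hnod.1, by simpa using hnod.2.1, ?_⟩
    · intro hmem
      apply hv
      rw [hps, List.mem_append]
      simpa using hmem
    · intro x hx1 y hx2
      exact hnod.2.2 x (by simpa using hx1) y (by simpa using hx2)
  · intro x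
    rw [Walk.support_cons, List.mem_cons, Walk.support_append, Walk.support_cons,
      List.tail_cons, List.mem_append, Walk.support_reverse, Walk.support_reverse,
      List.mem_reverse, List.mem_reverse, hps, List.mem_append]

end MyAux

/-- Every connected graph with independence number at most 2 has a Hamiltonian path. -/
theorem stmt_0 [Fintype V] [DecidableEq V] (G : SimpleGraph V)
    (hconn : G.Connected) (hα : IndepBound G 2) : HasHamPath G := by
  classical
  obtain ⟨v0⟩ := hconn.nonempty
  suffices h : ∀ k (u z : V) (p : G.Walk u z), p.IsPath →
      Fintype.card V ≤ p.support.length + k → HasHamPath G by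
    refine h (Fintype.card V) v0 v0 Walk.nil Walk.IsPath.nil ?_
    simp only [Walk.support_nil, List.length_singleton]
    omega
  intro k
  induction k with
  | zero =>
    intro u z p hp hcard
    refine ⟨u, z, p, fun a => ?_⟩
    have hnd := hp.support_nodup
    have hsub : p.support.toFinset.card ≤ Fintype.card V := Finset.card_le_univ _
    rw [List.toFinset_card_of_nodup hnd] at hsub
    have huniv : p.support.toFinset = Finset.univ := by
      apply Finset.eq_univ_of_card
      rw [List.toFinset_card_of_nodup hnd]
      omega
    have ha : a ∈ p.support := by
      rw [← List.mem_toFinset, huniv]; exact Finset.mem_univ a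
    exact List.count_eq_one_of_mem hnd ha
  | succ k ih =>
    intro u z p hp hcard
    by_cases hall : ∀ a : V, a ∈ p.support
    · exact ⟨u, z, p, fun a => List.count_eq_one_of_mem hp.support_nodup (hall a)⟩
    · push_neg at hall
      obtain ⟨b, hb⟩ := hall
      obtain ⟨wk⟩ := hconn u b
      obtain ⟨v, hv, w, hw, hadj⟩ := my_cross_aux (S := p.support.toFinset) wk
        (by simp [p.start_mem_support]) (by simpa using hb)
      rw [List.mem_toFinset] at hv hw
      obtain ⟨u', z', q, hq, hmem⟩ := my_extend_path hα p hp hv hw hadj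
      apply ih u' z' q hq
      have h1 : q.support.toFinset = insert v p.support.toFinset := by
        ext x; simp [hmem x]
      have hlen : q.support.length = p.support.length + 1 := by
        rw [← List.toFinset_card_of_nodup hq.support_nodup, h1,
          Finset.card_insert_of_notMem (by simpa using hv),
          List.toFinset_card_of_nodup hp.support_nodup]
      omega
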